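/- Let n ≤ m be positive integers with 3 < n(m−n+1), and let 0 < y_1 ≤ … ≤ y_n be real numbers. Then μ1(3,n,m,y) = Ψ1(y)³·μ0(3,n,m)·( Ψ2(y)³ + Ψ2(y)³/(nm − 2) + (3Ψ2(y)Ψ3(y) − 4Ψ2(y)³)/(nm − 1) + (2Ψ4(y) − 3Ψ2(y)Ψ3(y))/((nm − 1)(nm − 2)) ). -/

import Mathlib

open Finset

/-- Exact `p`-th moment of the GLRT statistic under `H₀`. -/
noncomputable def mu0 (p n m : ℕ) : ℝ :=
  Real.Gamma ((m : ℝ) * n) / ((n : ℝ) ^ p * Real.Gamma ((m : ℝ) * n - p)) *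
    ∏ j ∈ Finset.range n,
      Real.Gamma ((m : ℝ) - n + 1 - p / n + j) / Real.Gamma ((m : ℝ) - n + 1 + j)

/-- Exact `p`-th moment of the GLRT statistic under `H₁`, in terms of the covariance
eigenvalues `y`. -/
noncomputable def mu1 (p n m : ℕ) (y : Fin n → ℝ) : ℝ :=
  (Nat.factorial p : ℝ) / (n : ℝ) ^ p *
    (∏ i, y i ^ (-(p : ℝ) / n)) *
    (∏ j ∈ Finset.range n,
      Real.Gamma ((m : ℝ) - n + 1 - p / n + j) / Real.Gamma ((m : ℝ) - n + 1 + j)) *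
    ∑ k ∈ Finset.Nat.antidiagonalTuple n p,
      ∏ i, Real.Gamma ((m : ℝ) - p / n + k i) * y i ^ (k i)
        / (Real.Gamma ((k i : ℝ) + 1) * Real.Gamma ((m : ℝ) - p / n))

/-- `Ψ₁(y) = ∏ y_i^{-1/n}`. -/
noncomputable def Psi1 {n : ℕ} (y : Fin n → ℝ) : ℝ := ∏ i, y i ^ (-(1 : ℝ) / n)

/-- `Ψ_{ℓ+1}(y) = (1/n) Σ y_i^ℓ` for `ℓ ≥ 1`. -/
noncomputable def PsiS {n : ℕ} (ℓ : ℕ) (y : Fin n → ℝ) : ℝ := (1 / (n : ℝ)) * ∑ i, y i ^ ℓ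

noncomputable def Tsum (n p : ℕ) (f : Fin n → ℕ → ℝ) : ℝ :=
  ∑ k ∈ Finset.Nat.antidiagonalTuple n p, ∏ i, f i (k i)

lemma Tsum_succ (n p : ℕ) (f : Fin (n + 1) → ℕ → ℝ) :
    Tsum (n + 1) p f
      = ∑ ab ∈ Finset.HasAntidiagonal.antidiagonal p, f 0 ab.1 * Tsum n ab.2 (fun i => f i.succ) := by
  unfold Tsum
  simp only [Finset.mul_sum]
  rw [Finset.sum_sigma']
  refine Finset.sum_nbij' (i := fun k => ⟨(k 0, ∑ i : Fin n, k i.succ), Fin.tail k⟩)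
    (j := fun x => Fin.cons x.1.1 x.2) ?_ ?_ ?_ ?_ ?_
  · intro k hk
    rw [Finset.Nat.mem_antidiagonalTuple] at hk
    rw [Finset.mem_sigma]
    constructor
    · rw [Finset.HasAntidiagonal.mem_antidiagonal]
      rw [← hk, Fin.sum_univ_succ]
    · rw [Finset.Nat.mem_antidiagonalTuple]
      rfl
  · intro x hx
    rw [Finset.mem_sigma] at hx
    rw [Finset.Nat.mem_antidiagonalTuple]
    rw [Fin.sum_univ_succ]
    simp only [Fin.cons_zero, Fin.cons_succ]
    rw [Finset.Nat.mem_antidiagonalTuple.mp hx.2]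
    exact Finset.HasAntidiagonal.mem_antidiagonal.mp hx.1
  · intro k hk
    exact Fin.cons_self_tail k
  · intro x hx
    rw [Finset.mem_sigma] at hx
    have h2 : ∑ i : Fin n, (Fin.cons x.1.1 x.2 : Fin (n+1) → ℕ) i.succ = x.1.2 := by
      simp only [Fin.cons_succ]
      exact Finset.Nat.mem_antidiagonalTuple.mp hx.2
    simp only [Fin.cons_zero, h2, Fin.tail_cons]
  · intro k hk
    rw [Fin.prod_univ_succ]
    rfl

lemma Tsum_zero (n : ℕ) (f : Fin n → ℕ → ℝ) (h0 : ∀ i, f i 0 = 1) : Tsum n 0 f = 1 := by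
  unfold Tsum
  rw [Finset.Nat.antidiagonalTuple_zero_right]
  simp [h0]

lemma Tsum_one (n : ℕ) (f : Fin n → ℕ → ℝ) (h0 : ∀ i, f i 0 = 1) :
    Tsum n 1 f = ∑ i, f i 1 := by
  induction n with
  | zero => simp [Tsum, Finset.Nat.antidiagonalTuple_zero_succ]
  | succ n ih =>
    rw [Tsum_succ, Finset.Nat.sum_antidiagonal_eq_sum_range_succ_mk]
    simp only [Finset.sum_range_succ, Finset.sum_range_zero]
    norm_num
    rw [Tsum_zero n _ (fun i => h0 i.succ), ih _ (fun i => h0 i.succ),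
      Fin.sum_univ_succ, h0 0]
    ring

lemma Tsum_two (n : ℕ) (f : Fin n → ℕ → ℝ) (h0 : ∀ i, f i 0 = 1) :
    Tsum n 2 f = ∑ i, f i 2 + ((∑ i, f i 1) ^ 2 - ∑ i, (f i 1) ^ 2) / 2 := by
  induction n with
  | zero => simp [Tsum, Finset.Nat.antidiagonalTuple_zero_succ]
  | succ n ih =>
    rw [Tsum_succ, Finset.Nat.sum_antidiagonal_eq_sum_range_succ_mk]
    simp only [Finset.sum_range_succ, Finset.sum_range_zero]
    norm_num
    rw [Tsum_zero n _ (fun i => h0 i.succ), Tsum_one n _ (fun i => h0 i.succ),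
      ih _ (fun i => h0 i.succ), h0 0]
    simp only [Fin.sum_univ_succ]
    ring

lemma Tsum_three (n : ℕ) (f : Fin n → ℕ → ℝ) (h0 : ∀ i, f i 0 = 1) :
    Tsum n 3 f = ∑ i, f i 3 + ((∑ i, f i 2) * (∑ i, f i 1) - ∑ i, f i 2 * f i 1)
      + ((∑ i, f i 1) ^ 3 - 3 * (∑ i, f i 1) * (∑ i, (f i 1) ^ 2) + 2 * ∑ i, (f i 1) ^ 3) / 6 := by
  induction n with
  | zero => simp [Tsum, Finset.Nat.antidiagonalTuple_zero_succ]
  | succ n ih =>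
    rw [Tsum_succ, Finset.Nat.sum_antidiagonal_eq_sum_range_succ_mk]
    simp only [Finset.sum_range_succ, Finset.sum_range_zero]
    norm_num
    rw [Tsum_zero n _ (fun i => h0 i.succ), Tsum_one n _ (fun i => h0 i.succ),
      Tsum_two n _ (fun i => h0 i.succ), ih _ (fun i => h0 i.succ), h0 0]
    simp only [Fin.sum_univ_succ]
    ring

lemma Gamma_add_three (x : ℝ) (hx : 0 < x) :
    Real.Gamma (x + 1 + 1 + 1) = (x + 1 + 1) * ((x + 1) * (x * Real.Gamma x)) := by
  rw [Real.Gamma_add_one (by positivity), Real.Gamma_add_one (by positivity),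
    Real.Gamma_add_one (by positivity)]

set_option maxHeartbeats 2000000 in
theorem mu1_three_eq (n m : ℕ) (hn : 0 < n) (hnm : n ≤ m) (h3 : 3 < n * (m - n + 1))
    (y : Fin n → ℝ) (hy : ∀ i, 0 < y i) (hmono : Monotone y) :
    mu1 3 n m y = Psi1 y ^ 3 * mu0 3 n m *
      (PsiS 1 y ^ 3 + PsiS 1 y ^ 3 / ((n : ℝ) * m - 2)
        + (3 * PsiS 1 y * PsiS 2 y - 4 * PsiS 1 y ^ 3) / ((n : ℝ) * m - 1)
        + (2 * PsiS 3 y - 3 * PsiS 1 y * PsiS 2 y)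
          / (((n : ℝ) * m - 1) * ((n : ℝ) * m - 2))) := by
  have hn0 : (n : ℝ) ≠ 0 := Nat.cast_ne_zero.mpr hn.ne'
  have hnpos : (0:ℝ) < n := Nat.cast_pos.mpr hn
  have hnm4 : 4 ≤ n * m := by
    have h1 : n * (m - n + 1) ≤ n * m := by
      apply Nat.mul_le_mul_left
      omega
    omega
  have hN4 : (4:ℝ) ≤ (n:ℝ) * m := by
    have := Nat.cast_le (α := ℝ).mpr hnm4
    push_cast at this
    linarith
  set a : ℝ := (m:ℝ) - 3 / n with ha_def
  have hapos : 0 < a := by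
    rw [ha_def]
    rw [sub_pos, div_lt_iff₀ hnpos]
    nlinarith
  have hGa : Real.Gamma a ≠ 0 := (Real.Gamma_pos_of_pos hapos).ne'
  set f : Fin n → ℕ → ℝ := fun i k =>
    Real.Gamma (a + k) * y i ^ k / (Real.Gamma ((k : ℝ) + 1) * Real.Gamma a) with hf_def
  have h0 : ∀ i, f i 0 = 1 := by
    intro i
    simp [hf_def, Real.Gamma_one]
    exact hGa
  have hf1 : ∀ i, f i 1 = a * y i := by
    intro i
    simp only [hf_def, Nat.cast_one, pow_one]
    rw [Real.Gamma_add_one hapos.ne', show (1:ℝ) + 1 = 2 by norm_num, Real.Gamma_two]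
    field_simp
  have hf2 : ∀ i, f i 2 = (a + 1) * a / 2 * y i ^ 2 := by
    intro i
    simp only [hf_def, Nat.cast_ofNat]
    rw [show a + 2 = a + 1 + 1 by ring, Real.Gamma_add_one (by positivity),
      Real.Gamma_add_one hapos.ne',
      show (2:ℝ) + 1 = ((2:ℕ):ℝ) + 1 by norm_num, Real.Gamma_nat_eq_factorial]
    field_simp
    ring
  have hf3 : ∀ i, f i 3 = (a + 2) * ((a + 1) * a) / 6 * y i ^ 3 := by
    intro i
    simp only [hf_def, Nat.cast_ofNat]
    rw [show a + 3 = a + 1 + 1 + 1 by ring, Real.Gamma_add_one (by positivity),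
      Real.Gamma_add_one (by positivity), Real.Gamma_add_one hapos.ne',
      show (3:ℝ) + 1 = ((3:ℕ):ℝ) + 1 by norm_num, Real.Gamma_nat_eq_factorial]
    norm_num [Nat.factorial]
    field_simp
    ring
  set G : ℝ := ∏ j ∈ Finset.range n,
      Real.Gamma ((m : ℝ) - n + 1 - 3 / n + j) / Real.Gamma ((m : ℝ) - n + 1 + j) with hG_def
  set S1 : ℝ := ∑ i, y i with hS1
  set S2 : ℝ := ∑ i, y i ^ 2 with hS2
  set S3 : ℝ := ∑ i, y i ^ 3 with hS3
  have e1 : ∑ i, f i 1 = a * S1 := by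
    rw [hS1, Finset.mul_sum]; exact Finset.sum_congr rfl fun i _ => hf1 i
  have e2 : ∑ i, f i 2 = (a + 1) * a / 2 * S2 := by
    rw [hS2, Finset.mul_sum]; exact Finset.sum_congr rfl fun i _ => hf2 i
  have e3 : ∑ i, f i 3 = (a + 2) * ((a + 1) * a) / 6 * S3 := by
    rw [hS3, Finset.mul_sum]; exact Finset.sum_congr rfl fun i _ => hf3 i
  have e4 : ∑ i, (f i 1) ^ 2 = a ^ 2 * S2 := by
    rw [hS2, Finset.mul_sum]
    exact Finset.sum_congr rfl fun i _ => by rw [hf1 i]; ring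
  have e5 : ∑ i, (f i 1) ^ 3 = a ^ 3 * S3 := by
    rw [hS3, Finset.mul_sum]
    exact Finset.sum_congr rfl fun i _ => by rw [hf1 i]; ring
  have e6 : ∑ i, f i 2 * f i 1 = (a + 1) * a ^ 2 / 2 * S3 := by
    rw [hS3, Finset.mul_sum]
    exact Finset.sum_congr rfl fun i _ => by rw [hf1 i, hf2 i]; ring
  have hT : Tsum n 3 f = (a + 2) * ((a + 1) * a) / 6 * S3
      + ((a + 1) * a / 2 * S2) * (a * S1) - (a + 1) * a ^ 2 / 2 * S3
      + ((a * S1) ^ 3 - 3 * (a * S1) * (a ^ 2 * S2) + 2 * (a ^ 3 * S3)) / 6 := by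
    rw [Tsum_three n f h0, e1, e2, e3, e4, e5, e6]
    ring
  have hmu1 : mu1 3 n m y
      = 6 / (n:ℝ) ^ 3 * (∏ i, y i ^ (-(3:ℝ) / (n:ℝ))) * G * Tsum n 3 f := by
    rw [mu1, Tsum, hG_def, hf_def]
    norm_num [Nat.factorial]
    exact Or.inl rfl
  have hPsi : Psi1 y ^ 3 = ∏ i, y i ^ (-(3:ℝ) / (n:ℝ)) := by
    rw [Psi1, ← Finset.prod_pow]
    refine Finset.prod_congr rfl fun i _ => ?_
    rw [← Real.rpow_natCast (y i ^ (-(1:ℝ)/(n:ℝ))) 3, ← Real.rpow_mul (hy i).le]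
    norm_num
    ring_nf
  have hGam : Real.Gamma ((m:ℝ) * n)
      = ((m:ℝ) * n - 1) * (((m:ℝ) * n - 2) * (((m:ℝ) * n - 3) * Real.Gamma ((m:ℝ) * n - 3))) := by
    have hx : (0:ℝ) < (m:ℝ) * n - 3 := by nlinarith
    have h := Gamma_add_three ((m:ℝ) * n - 3) hx
    rw [show (m:ℝ) * n - 3 + 1 + 1 + 1 = (m:ℝ) * n by ring] at h
    rw [h]
    ring
  have hmu0 : mu0 3 n m
      = ((m:ℝ) * n - 1) * (((m:ℝ) * n - 2) * ((m:ℝ) * n - 3)) / (n:ℝ) ^ 3 * G := by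
    have hGne : Real.Gamma ((m:ℝ) * n - 3) ≠ 0 := by
      apply (Real.Gamma_pos_of_pos _).ne'
      nlinarith
    rw [mu0, hG_def]
    push_cast
    congr 1
    rw [hGam]
    field_simp
  have hP1 : PsiS 1 y = S1 / n := by
    rw [PsiS, hS1]
    simp [pow_one]
    ring
  have hP2 : PsiS 2 y = S2 / n := by rw [PsiS, hS2]; ring
  have hP3 : PsiS 3 y = S3 / n := by rw [PsiS, hS3]; ring
  rw [hmu1, hT, hPsi, hmu0, hP1, hP2, hP3, ha_def]
  have h1 : (n:ℝ) * m - 1 ≠ 0 := by nlinarith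
  have h2 : (n:ℝ) * m - 2 ≠ 0 := by nlinarith
  field_simp
  ring
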